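/- Let a₁,…,aₙ be unit vectors in a real Hilbert space, set s = a₁+⋯+aₙ and yⱼ = ⟨s, aⱼ⟩. Assume 1 ≤ yⱼ ≤ 3.5 for every j = 1,…,n, and that yⱼ > 1 for at least one j (equivalently, the system a₁,…,aₙ is not orthonormal). Then the vector x = s/‖s‖ satisfies the strict inequality ∏_{j=1}^{n} |⟨x, aⱼ⟩| > n^{−n/2}. -/
import Mathlib


open scoped RealInnerProductSpace


lemma exp125 : Real.exp 1.25 < 3.5 := by
  have h4 : Real.exp 1.25 ^ 4 = Real.exp 1 ^ 5 := by
    rw [← Real.exp_nat_mul, ← Real.exp_nat_mul]; norm_num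
  have h1 : Real.exp 1 ^ 5 < 2.7182818286 ^ 5 :=
    pow_lt_pow_left₀ Real.exp_one_lt_d9 (Real.exp_pos 1).le (by norm_num)
  have h : Real.exp 1.25 ^ 4 < 3.5 ^ 4 := by
    rw [h4]
    calc Real.exp 1 ^ 5 < 2.7182818286 ^ 5 := h1
      _ < 3.5 ^ 4 := by norm_num
  exact lt_of_pow_lt_pow_left₀ 4 (by norm_num) h

lemma log35 : 5 < 4 * Real.log 3.5 := by
  have : (1.25:ℝ) < Real.log 3.5 := by
    rw [Real.lt_log_iff_exp_lt (by norm_num)]; exact exp125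
  have h : (5:ℝ) = 4 * 1.25 := by norm_num
  rw [h]
  exact (mul_lt_mul_iff_right₀ (by norm_num)).mpr this

lemma logconc (y : ℝ) (h1 : 1 ≤ y) (h2 : y ≤ 3.5) :
    (2 * y - 2) / 5 * Real.log 3.5 ≤ Real.log y := by
  have h := strictConcaveOn_log_Ioi.concaveOn.2 (Set.mem_Ioi.mpr (one_pos (α := ℝ)))
    (Set.mem_Ioi.mpr (by norm_num : (0:ℝ) < 3.5))
    (show (0:ℝ) ≤ (7 - 2 * y) / 5 by nlinarith)
    (show (0:ℝ) ≤ (2 * y - 2) / 5 by linarith)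
    (show (7 - 2 * y) / 5 + (2 * y - 2) / 5 = 1 by ring)
  have he : ((7 - 2 * y) / 5) • (1:ℝ) + ((2 * y - 2) / 5) • (3.5:ℝ) = y := by
    simp only [smul_eq_mul]; ring
  rw [he] at h
  simpa [Real.log_one, smul_eq_mul] using h

lemma key_exp (y : ℝ) (h1 : 1 ≤ y) (h2 : y ≤ 3.5) :
    Real.exp (y - 1) ≤ y ^ 2 ∧ (1 < y → Real.exp (y - 1) < y ^ 2) := by
  have hy0 : (0:ℝ) < y := by linarith
  have hlc := logconc y h1 h2
  have hl := log35
  have hsq : Real.exp (2 * Real.log y) = y ^ 2 := by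
    have h := Real.exp_nat_mul (Real.log y) 2
    rw [Real.exp_log hy0] at h
    simpa using h
  constructor
  · rw [← hsq]
    refine Real.exp_le_exp.mpr ?_
    nlinarith [mul_nonneg (by linarith : (0:ℝ) ≤ y - 1) (by linarith : (0:ℝ) ≤ 4 * Real.log 3.5 - 5)]
  · intro hy1
    rw [← hsq]
    refine Real.exp_lt_exp.mpr ?_
    nlinarith [mul_pos (by linarith : (0:ℝ) < y - 1) (by linarith : (0:ℝ) < 4 * Real.log 3.5 - 5)]

/-- If the unit vectors `a₁,…,aₙ` in a real Hilbert space satisfy `1 ≤ ⟨s,aⱼ⟩ ≤ 3.5`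
for `s = a₁+⋯+aₙ`, and `⟨s,aⱼ⟩ > 1` for some `j` (the system is not orthonormal),
then `x = s/‖s‖` satisfies the strict inequality `∏ⱼ |⟨x,aⱼ⟩| > n^(-n/2)`. -/
theorem stmt6 {H : Type*} [NormedAddCommGroup H] [InnerProductSpace ℝ H] [CompleteSpace H]
    (n : ℕ) (a : Fin n → H) (ha : ∀ j, ‖a j‖ = 1)
    (hy : ∀ j, 1 ≤ ⟪∑ i, a i, a j⟫ ∧ ⟪∑ i, a i, a j⟫ ≤ 3.5)
    (hstrict : ∃ j, 1 < ⟪∑ i, a i, a j⟫) :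
    (n : ℝ) ^ (-(n : ℝ) / 2) < ∏ j, |⟪‖∑ i, a i‖⁻¹ • ∑ i, a i, a j⟫| := by
  obtain ⟨j0, hj0⟩ := hstrict
  have hn : 0 < n := j0.pos
  set s : H := ∑ i, a i with hs
  set y : Fin n → ℝ := fun j => ⟪s, a j⟫ with hydef
  have hy1 : ∀ j, 1 ≤ y j := fun j => (hy j).1
  have hy2 : ∀ j, y j ≤ 3.5 := fun j => (hy j).2
  set S : ℝ := ∑ j, y j with hSdef
  have hnorm2 : ‖s‖ ^ 2 = S := by
    rw [← real_inner_self_eq_norm_sq, hs, inner_sum]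
  have hSn : (n : ℝ) ≤ S := by
    calc (n:ℝ) = ∑ _j : Fin n, (1:ℝ) := by simp
    _ ≤ S := Finset.sum_le_sum fun j _ => hy1 j
  have hn0 : (0:ℝ) < n := Nat.cast_pos.mpr hn
  have hSpos : 0 < S := lt_of_lt_of_le hn0 hSn
  have hns : 0 < ‖s‖ := by nlinarith [norm_nonneg s]
  have hP : 0 < ∏ j, y j := Finset.prod_pos fun j _ => lt_of_lt_of_le one_pos (hy1 j)
  -- rewrite the product
  have hprod : ∏ j, |⟪‖s‖⁻¹ • s, a j⟫| = ‖s‖⁻¹ ^ n * ∏ j, y j := by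
    have : ∀ j ∈ Finset.univ, |⟪‖s‖⁻¹ • s, a j⟫| = ‖s‖⁻¹ * y j := by
      intro j _
      rw [real_inner_smul_left]
      exact abs_of_nonneg (mul_nonneg (inv_nonneg.mpr (norm_nonneg s))
        (le_trans zero_le_one (hy1 j)))
    rw [Finset.prod_congr rfl this, Finset.prod_mul_distrib, Finset.prod_const,
      Finset.card_univ, Fintype.card_fin]
  -- key inequality chain
  have hstep : ∏ j, Real.exp (y j - 1) < ∏ j, (y j) ^ 2 := by
    refine Finset.prod_lt_prod (fun j _ => Real.exp_pos _)
      (fun j _ => (key_exp (y j) (hy1 j) (hy2 j)).1) ⟨j0, Finset.mem_univ _, ?_⟩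
    exact (key_exp (y j0) (hy1 j0) (hy2 j0)).2 hj0
  have hexp : ∏ j, Real.exp (y j - 1) = Real.exp (S - n) := by
    rw [← Real.exp_sum]
    congr 1
    rw [Finset.sum_sub_distrib, Finset.sum_const, Finset.card_univ, Fintype.card_fin]
    simp [hSdef]
  have hexp2 : (S / n) ^ n ≤ Real.exp (S - n) := by
    have h1 : Real.exp (S - n) = Real.exp (S / n - 1) ^ n := by
      rw [← Real.exp_nat_mul]
      congr 1
      field_simp
    rw [h1]
    exact pow_le_pow_left₀ (by positivity) (by linarith [Real.add_one_le_exp (S / n - 1)]) n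
  have hkey : S ^ n < (n:ℝ) ^ n * (∏ j, y j) ^ 2 := by
    have h2 : (∏ j, y j) ^ 2 = ∏ j, (y j) ^ 2 := by rw [← Finset.prod_pow]
    have h3 : S ^ n = (n:ℝ) ^ n * (S / n) ^ n := by
      rw [← mul_pow]; congr 1; field_simp
    rw [h3, h2]
    exact (mul_lt_mul_iff_right₀ (by positivity)).mpr (lt_of_le_of_lt hexp2 (hexp ▸ hstep))
  -- convert the goal
  have hL : (n : ℝ) ^ (-(n : ℝ) / 2) = (Real.sqrt n ^ n)⁻¹ := by
    rw [Real.sqrt_eq_rpow, ← Real.rpow_natCast ((n:ℝ) ^ ((1:ℝ)/2)) n,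
      ← Real.rpow_mul (Nat.cast_nonneg n), ← Real.rpow_neg (Nat.cast_nonneg n)]
    congr 1
    ring
  have hsq : (Real.sqrt n ^ n) ^ 2 = (n:ℝ) ^ n := by
    rw [← pow_mul, mul_comm n 2, pow_mul, Real.sq_sqrt (Nat.cast_nonneg n)]
  have hsn : 0 < Real.sqrt n ^ n := pow_pos (Real.sqrt_pos.mpr hn0) n
  have hmain : ‖s‖ ^ n < Real.sqrt n ^ n * ∏ j, y j := by
    refine lt_of_pow_lt_pow_left₀ 2 (by positivity) ?_
    calc (‖s‖ ^ n) ^ 2 = (‖s‖ ^ 2) ^ n := by ring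
      _ = S ^ n := by rw [hnorm2]
      _ < (n:ℝ) ^ n * (∏ j, y j) ^ 2 := hkey
      _ = (Real.sqrt n ^ n * ∏ j, y j) ^ 2 := by rw [mul_pow, hsq]
  rw [hprod, hL]
  have hB : 0 < ‖s‖ ^ n := pow_pos hns n
  have hrw : ‖s‖⁻¹ ^ n * ∏ j, y j = (∏ j, y j) / ‖s‖ ^ n := by
    rw [inv_pow]; ring
  rw [hrw, lt_div_iff₀ hB, ← sub_pos]
  have h1 : (Real.sqrt n ^ n)⁻¹ * (Real.sqrt n ^ n * ∏ j, y j - ‖s‖ ^ n) > 0 :=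
    mul_pos (inv_pos.mpr hsn) (sub_pos.mpr hmain)
  have h2 : (Real.sqrt n ^ n)⁻¹ * (Real.sqrt n ^ n) = 1 := inv_mul_cancel₀ (ne_of_gt hsn)
  nlinarith [h1, h2]
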